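/- Let n ≥ 1 and k be integers with 0 ≤ k ≤ n−1, and let w ∈ ℂ with |w| < 1. Then the convergent series Σ_{ℓ=0}^{∞} ((n+1)_ℓ · (k+1)_ℓ / ((k+2)_ℓ · ℓ!)) · w^ℓ equals (1−w)^{−n} · Σ_{ℓ=0}^{n−1−k} (−1)^ℓ · ((n−k−1)!/(n−k−1−ℓ)!) · w^ℓ / (k+2)_ℓ, where (q)_ℓ denotes the Pochhammer symbol (rising factorial). -/

import Mathlib

namespace GaussHGAux

noncomputable def P (k j : ℕ) : ℂ := (ascPochhammer ℂ j).eval ((k : ℂ) + 2)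

noncomputable def A (n i : ℕ) : ℂ := ((i + (n - 1)).choose (n - 1) : ℂ)

noncomputable def bb (n k j : ℕ) : ℂ :=
  if j ≤ n - k - 1 then
    (-1 : ℂ) ^ j * ((n - k - 1).factorial / ((n - k - 1 - j).factorial : ℂ)) / P k j
  else 0

noncomputable def c (n k m : ℕ) : ℂ := ((n + m).choose m : ℂ) * ((k : ℂ) + 1) / ((k : ℂ) + 1 + m)

lemma P_eq_cast (k j : ℕ) : P k j = (((k + 2).ascFactorial j : ℕ) : ℂ) := by
  rw [P, show ((k : ℂ) + 2) = ((k + 2 : ℕ) : ℂ) by push_cast; ring,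
    ← ascPochhammer_eval_cast, ascPochhammer_nat_eq_ascFactorial]

lemma P_ne (k j : ℕ) : P k j ≠ 0 := by
  rw [P_eq_cast]
  exact_mod_cast (Nat.ascFactorial_pos (k + 1) j).ne'

lemma P_succ (k j : ℕ) : P k (j + 1) = P k j * ((k : ℂ) + 2 + j) := by
  rw [P, P, ascPochhammer_succ_eval]

lemma A_rec (n : ℕ) (hn : 1 ≤ n) (i : ℕ) :
    ((i : ℂ) + 1) * A n (i + 1) = ((n : ℂ) + i) * A n i := by
  have h : (n - 1 + i + 1) * (n - 1 + i).choose i = (n - 1 + i + 1).choose (i + 1) * (i + 1) :=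
    Nat.add_one_mul_choose_eq (n - 1 + i) i
  have e1 : (i + (n - 1)).choose (n - 1) = (n - 1 + i).choose i := by
    have := Nat.choose_symm (Nat.le_add_left i (n - 1))
    rw [Nat.add_sub_cancel] at this
    rw [Nat.add_comm i (n - 1)]
    exact this
  have e2 : (i + 1 + (n - 1)).choose (n - 1) = (n - 1 + i + 1).choose (i + 1) := by
    have := Nat.choose_symm (Nat.le_add_left (i + 1) (n - 1))
    rw [Nat.add_sub_cancel] at this
    rw [show i + 1 + (n - 1) = n - 1 + (i + 1) by omega]
    rw [show n - 1 + i + 1 = n - 1 + (i + 1) by omega]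
    exact this
  have h1 : A n i = ((n - 1 + i).choose i : ℂ) := by rw [A, e1]
  have h2 : A n (i + 1) = ((n - 1 + i + 1).choose (i + 1) : ℂ) := by rw [A, e2]
  have hn' : ((n - 1 + i + 1 : ℕ) : ℂ) = (n : ℂ) + i := by
    have : n - 1 + i + 1 = n + i := by omega
    rw [this]; push_cast; ring
  rw [h1, h2]
  calc ((i : ℂ) + 1) * ((n - 1 + i + 1).choose (i + 1) : ℂ)
      = (((n - 1 + i + 1).choose (i + 1) * (i + 1) : ℕ) : ℂ) := by push_cast; ring
    _ = (((n - 1 + i + 1) * (n - 1 + i).choose i : ℕ) : ℂ) := by rw [← h]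
    _ = ((n : ℂ) + i) * ((n - 1 + i).choose i : ℂ) := by push_cast [← hn']; push_cast; ring

lemma bb_rec (n k : ℕ) (hn : 1 ≤ n) (hk : k ≤ n - 1) (j : ℕ) (hj : j ≤ n - k - 1) :
    ((k : ℂ) + 2 + j) * bb n k (j + 1) = ((j : ℂ) + 1 + k - n) * bb n k j := by
  rcases eq_or_lt_of_le hj with hje | hjlt
  · have h1 : ¬ (j + 1 ≤ n - k - 1) := by omega
    have h2 : ((j : ℂ) + 1 + k - n) = 0 := by
      have hn2 : n = j + 1 + k := by omega
      rw [hn2]; push_cast; ring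
    simp [bb, h1, h2]
  · have h1 : j + 1 ≤ n - k - 1 := hjlt
    have hNj : n - k - 1 - j = (n - k - 1 - (j + 1)) + 1 := by omega
    have hcast : (n : ℂ) = (j : ℂ) + (n - k - 1 - (j + 1) : ℕ) + 2 + k := by
      have h : n = j + (n - k - 1 - (j + 1)) + 2 + k := by omega
      conv_lhs => rw [h]
      push_cast; ring
    simp only [bb, if_pos h1, if_pos hj, P_succ, hNj]
    have hP := P_ne k j
    have hk2 : ((k : ℂ) + 2 + j) ≠ 0 := by
      have h2 : ((k : ℂ) + 2 + j) = ((k + 2 + j : ℕ) : ℂ) := by push_cast; ring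
      rw [h2]
      exact Nat.cast_ne_zero.mpr (by omega)
    generalize hgen : n - k - 1 - (j + 1) = t at hcast ⊢
    rw [hcast, pow_succ]
    have hft : (((t + 1).factorial : ℕ) : ℂ) = ((t : ℂ) + 1) * ((t.factorial : ℕ) : ℂ) := by
      rw [Nat.factorial_succ]; push_cast; ring
    rw [hft]
    have hf1 : ((t.factorial : ℕ) : ℂ) ≠ 0 := Nat.cast_ne_zero.mpr (Nat.factorial_ne_zero _)
    have hf2 : ((t : ℂ) + 1) ≠ 0 := by
      have h3 : ((t : ℂ) + 1) = ((t + 1 : ℕ) : ℂ) := by push_cast; ring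
      rw [h3]; exact Nat.cast_ne_zero.mpr (by omega)
    field_simp
    ring

lemma S_rec (n k : ℕ) (hn : 1 ≤ n) (hk : k ≤ n - 1) (m : ℕ) :
    ((m : ℂ) + 1) * ((k : ℂ) + m + 2) *
        (∑ j ∈ Finset.range (n - k - 1 + 1), if j ≤ m + 1 then bb n k j * A n (m + 1 - j) else 0)
      = ((n : ℂ) + m + 1) * ((k : ℂ) + m + 1) *
        (∑ j ∈ Finset.range (n - k - 1 + 1), if j ≤ m then bb n k j * A n (m - j) else 0) := by
  set G : ℕ → ℂ := fun j =>
    if j ≤ m + 1 then -(j : ℂ) * ((k : ℂ) + 1 + j) * bb n k j * A n (m + 1 - j) else 0 with hG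
  have key : ∀ j ∈ Finset.range (n - k - 1 + 1),
      ((m : ℂ) + 1) * ((k : ℂ) + m + 2) * (if j ≤ m + 1 then bb n k j * A n (m + 1 - j) else 0)
        - ((n : ℂ) + m + 1) * ((k : ℂ) + m + 1) * (if j ≤ m then bb n k j * A n (m - j) else 0)
      = G (j + 1) - G j := by
    intro j hjmem
    have hj : j ≤ n - k - 1 := by
      simp only [Finset.mem_range] at hjmem; omega
    rcases le_or_gt j m with hjm | hjm
    · have h1 : j ≤ m + 1 := by omega
      have h2 : j + 1 ≤ m + 1 := by omega
      rw [hG]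
      simp only [if_pos h1, if_pos hjm, if_pos h2,
        show m + 1 - (j + 1) = m - j from by omega,
        show m + 1 - j = (m - j) + 1 from by omega]
      have hA := A_rec n hn (m - j)
      rw [Nat.cast_sub hjm] at hA
      have hB := bb_rec n k hn hk j hj
      push_cast
      linear_combination (bb n k j * ((k : ℂ) + m + 2 + j)) * hA +
        (((j : ℂ) + 1) * A n (m - j)) * hB
    · rcases eq_or_lt_of_le (show m + 1 ≤ j from hjm) with hje | hjgt
      · have h1 : j ≤ m + 1 := by omega
        have h2 : ¬ (j ≤ m) := by omega
        have h3 : ¬ (j + 1 ≤ m + 1) := by omega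
        rw [hG]
        simp only [if_pos h1, if_neg h2, if_neg h3]
        rw [← hje]
        push_cast
        ring
      · have h1 : ¬ (j ≤ m + 1) := by omega
        have h2 : ¬ (j ≤ m) := by omega
        have h3 : ¬ (j + 1 ≤ m + 1) := by omega
        rw [hG]
        simp only [if_pos, if_neg h1, if_neg h2, if_neg h3]
        ring
  have hsum := Finset.sum_congr rfl key
  rw [Finset.sum_range_sub G (n - k - 1 + 1)] at hsum
  have hG0 : G 0 = 0 := by simp [hG]
  have hGtop : G (n - k - 1 + 1) = 0 := by
    rw [hG]
    simp only [bb, if_neg (show ¬ (n - k - 1 + 1 ≤ n - k - 1) from by omega)]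
    split <;> ring
  rw [hG0, hGtop, sub_zero] at hsum
  rw [Finset.sum_sub_distrib, ← Finset.mul_sum, ← Finset.mul_sum] at hsum
  exact sub_eq_zero.mp hsum
  
lemma c_rec (n k m : ℕ) :
    ((m : ℂ) + 1) * ((k : ℂ) + m + 2) * c n k (m + 1)
      = ((n : ℂ) + m + 1) * ((k : ℂ) + m + 1) * c n k m := by
  have hchoose : (n + m + 1) * (n + m).choose m = (n + m + 1).choose (m + 1) * (m + 1) :=
    Nat.add_one_mul_choose_eq (n + m) m
  have hc : ((n : ℂ) + m + 1) * ((n + m).choose m : ℂ)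
      = ((n + m + 1).choose (m + 1) : ℂ) * ((m : ℂ) + 1) := by
    exact_mod_cast hchoose
  unfold c
  rw [show n + (m + 1) = n + m + 1 from by omega]
  have h1 : ((k : ℂ) + 1 + (m : ℂ)) ≠ 0 := by
    have h : ((k : ℂ) + 1 + (m : ℂ)) = ((k + 1 + m : ℕ) : ℂ) := by push_cast; ring
    rw [h]; exact Nat.cast_ne_zero.mpr (by omega)
  have h2 : ((k : ℂ) + (m : ℂ) + 2) ≠ 0 := by
    have h : ((k : ℂ) + (m : ℂ) + 2) = ((k + m + 2 : ℕ) : ℂ) := by push_cast; ring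
    rw [h]; exact Nat.cast_ne_zero.mpr (by omega)
  have hd1 : ((k : ℂ) + 1 + ((m + 1 : ℕ) : ℂ)) = (k : ℂ) + m + 2 := by push_cast; ring
  rw [hd1]
  field_simp
  linear_combination (-((k : ℂ) + 1 + m)) * hc

lemma S_eq (n k : ℕ) (hn : 1 ≤ n) (hk : k ≤ n - 1) (m : ℕ) :
    (∑ j ∈ Finset.range (n - k - 1 + 1), if j ≤ m then bb n k j * A n (m - j) else 0)
      = c n k m := by
  induction m with
  | zero =>
    rw [Finset.sum_eq_single_of_mem 0 (Finset.mem_range.mpr (by omega))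
      (fun b _ hb => by rw [if_neg (by omega)])]
    rw [if_pos (Nat.zero_le 0)]
    have hfac : ((n - k - 1).factorial : ℂ) ≠ 0 := Nat.cast_ne_zero.mpr (Nat.factorial_ne_zero _)
    have hk1 : ((k : ℂ) + 1) ≠ 0 := by
      have : ((k : ℂ) + 1) = ((k + 1 : ℕ) : ℂ) := by push_cast; ring
      rw [this]; exact Nat.cast_ne_zero.mpr (by omega)
    simp [bb, A, c, P, div_self hfac, div_self hk1]
  | succ m ih =>
    have h1 := S_rec n k hn hk m
    rw [ih] at h1
    have h2 := c_rec n k m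
    have hne : ((m : ℂ) + 1) * ((k : ℂ) + m + 2) ≠ 0 := by
      apply mul_ne_zero
      · have : ((m : ℂ) + 1) = ((m + 1 : ℕ) : ℂ) := by push_cast; ring
        rw [this]; exact Nat.cast_ne_zero.mpr (by omega)
      · have : ((k : ℂ) + m + 2) = ((k + m + 2 : ℕ) : ℂ) := by push_cast; ring
        rw [this]; exact Nat.cast_ne_zero.mpr (by omega)
    apply mul_left_cancel₀ hne
    rw [mul_assoc, mul_assoc] at h1 h2 ⊢
    rw [h1, h2]

lemma coeff_eq (n k m : ℕ) :
    (ascPochhammer ℂ m).eval ((n : ℂ) + 1) * (ascPochhammer ℂ m).eval ((k : ℂ) + 1) /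
        ((ascPochhammer ℂ m).eval ((k : ℂ) + 2) * (m.factorial : ℂ))
      = c n k m := by
  have E : ∀ a : ℕ, (ascPochhammer ℂ m).eval ((a : ℂ) + 1)
      = ((m.factorial * (a + m).choose m : ℕ) : ℂ) := by
    intro a
    rw [show ((a : ℂ) + 1) = ((a + 1 : ℕ) : ℂ) from by push_cast; ring,
      ← ascPochhammer_eval_cast, ascPochhammer_nat_eq_ascFactorial,
      Nat.ascFactorial_eq_factorial_mul_choose]
  have E2 : (ascPochhammer ℂ m).eval ((k : ℂ) + 2)
      = ((m.factorial * (k + 1 + m).choose m : ℕ) : ℂ) := by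
    have := E (k + 1)
    rw [show (((k + 1 : ℕ) : ℂ) + 1) = (k : ℂ) + 2 from by push_cast; ring] at this
    exact this
  have hsymm1 : (k + m).choose m = (k + m).choose k := by
    have := Nat.choose_symm (Nat.le_add_right k m)
    rwa [Nat.add_sub_cancel_left] at this
  have hsymm2 : (k + 1 + m).choose m = (k + 1 + m).choose (k + 1) := by
    have := Nat.choose_symm (Nat.le_add_right (k + 1) m)
    rwa [Nat.add_sub_cancel_left] at this
  have hchoose : (k + m + 1) * (k + m).choose k = (k + m + 1).choose (k + 1) * (k + 1) :=
    Nat.add_one_mul_choose_eq (k + m) k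
  have hnat : (k + 1 + m) * (k + m).choose m = (k + 1) * ((k + 1 + m).choose m) := by
    rw [hsymm1, hsymm2, show k + 1 + m = k + m + 1 from by omega, hchoose]
    exact Nat.mul_comm _ _
  have hc : ((k : ℂ) + 1 + m) * ((k + m).choose m : ℂ)
      = ((k : ℂ) + 1) * ((k + 1 + m).choose m : ℂ) := by exact_mod_cast hnat
  rw [E n, E k, E2]
  unfold c
  have hf : ((m.factorial : ℕ) : ℂ) ≠ 0 := Nat.cast_ne_zero.mpr (Nat.factorial_ne_zero _)
  have hch : (((k + 1 + m).choose m : ℕ) : ℂ) ≠ 0 :=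
    Nat.cast_ne_zero.mpr (Nat.choose_pos (Nat.le_add_left m (k + 1))).ne'
  have hden : ((k : ℂ) + 1 + m) ≠ 0 := by
    have h : ((k : ℂ) + 1 + m) = ((k + 1 + m : ℕ) : ℂ) := by push_cast; ring
    rw [h]; exact Nat.cast_ne_zero.mpr (by omega)
  push_cast
  field_simp
  linear_combination (((n + m).choose m : ℕ) : ℂ) * hc

end GaussHGAux

open GaussHGAux in
/-- Simplification (eq_hyposimp) of the Gauss hypergeometric series
`₂F₁(n+1, k+1; k+2; w)`: for `0 ≤ k ≤ n−1` and `|w| < 1`, the series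
`Σ_ℓ ((n+1)_ℓ(k+1)_ℓ/((k+2)_ℓ ℓ!))·w^ℓ` converges to
`(1−w)^{−n}·Σ_{ℓ=0}^{n−1−k} (−1)^ℓ·((n−k−1)!/(n−k−1−ℓ)!)·w^ℓ/(k+2)_ℓ`. -/
theorem gauss_hypergeometric_simplification (n k : ℕ) (hn : 1 ≤ n) (hk : k ≤ n - 1)
    (w : ℂ) (hw : ‖w‖ < 1) :
    HasSum
      (fun ℓ : ℕ =>
        (ascPochhammer ℂ ℓ).eval ((n : ℂ) + 1) * (ascPochhammer ℂ ℓ).eval ((k : ℂ) + 1) /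
            ((ascPochhammer ℂ ℓ).eval ((k : ℂ) + 2) * ℓ.factorial) * w ^ ℓ)
      (((1 - w) ^ n)⁻¹ *
        ∑ ℓ ∈ Finset.range (n - k),
          (-1 : ℂ) ^ ℓ * ((n - k - 1).factorial / ((n - k - 1 - ℓ).factorial : ℂ)) * w ^ ℓ /
            (ascPochhammer ℂ ℓ).eval ((k : ℂ) + 2)) := by
  have hw' : ‖w‖ < 1 := by exact hw
  have hbin : HasSum (fun i : ℕ => A n i * w ^ i) (((1 - w) ^ n)⁻¹) := by
    have h := hasSum_choose_mul_geometric_of_norm_lt_one (𝕜 := ℂ) (n - 1) hw'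
    rw [show n - 1 + 1 = n from by omega, one_div] at h
    exact h
  have hterm : ∀ j ∈ Finset.range (n - k - 1 + 1),
      HasSum (fun m : ℕ => if j ≤ m then bb n k j * A n (m - j) * w ^ m else 0)
        (bb n k j * w ^ j * ((1 - w) ^ n)⁻¹) := by
    intro j _
    have h1 : HasSum (fun i : ℕ => bb n k j * w ^ j * (A n i * w ^ i))
        (bb n k j * w ^ j * ((1 - w) ^ n)⁻¹) := hbin.mul_left _
    refine (Function.Injective.hasSum_iff (add_left_injective j) ?_).mp ?_
    · intro x hx
      rw [if_neg]
      intro hle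
      exact hx ⟨x - j, Nat.sub_add_cancel hle⟩
    · have h2 : ((fun m : ℕ => if j ≤ m then bb n k j * A n (m - j) * w ^ m else 0)
          ∘ (· + j)) = fun i : ℕ => bb n k j * w ^ j * (A n i * w ^ i) := by
        funext i
        simp only [Function.comp_apply]
        rw [if_pos (Nat.le_add_left j i), Nat.add_sub_cancel, pow_add]
        ring
      rw [h2]
      exact h1
  have htotal := hasSum_sum hterm
  have hfun : (fun m : ℕ => ∑ j ∈ Finset.range (n - k - 1 + 1),
        if j ≤ m then bb n k j * A n (m - j) * w ^ m else 0)
      = fun m : ℕ =>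
        (ascPochhammer ℂ m).eval ((n : ℂ) + 1) * (ascPochhammer ℂ m).eval ((k : ℂ) + 1) /
          ((ascPochhammer ℂ m).eval ((k : ℂ) + 2) * m.factorial) * w ^ m := by
    funext m
    have hsplit : (∑ j ∈ Finset.range (n - k - 1 + 1),
          if j ≤ m then bb n k j * A n (m - j) * w ^ m else 0)
        = (∑ j ∈ Finset.range (n - k - 1 + 1),
            if j ≤ m then bb n k j * A n (m - j) else 0) * w ^ m := by
      rw [Finset.sum_mul]
      apply Finset.sum_congr rfl
      intro j _
      split <;> simp
    rw [hsplit, S_eq n k hn hk m, ← coeff_eq n k m]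
  have hval : (∑ j ∈ Finset.range (n - k - 1 + 1), bb n k j * w ^ j * ((1 - w) ^ n)⁻¹)
      = ((1 - w) ^ n)⁻¹ *
        ∑ ℓ ∈ Finset.range (n - k),
          (-1 : ℂ) ^ ℓ * ((n - k - 1).factorial / ((n - k - 1 - ℓ).factorial : ℂ)) * w ^ ℓ /
            (ascPochhammer ℂ ℓ).eval ((k : ℂ) + 2) := by
    rw [show n - k - 1 + 1 = n - k from by omega, Finset.mul_sum]
    apply Finset.sum_congr rfl
    intro j hj
    have hjN : j ≤ n - k - 1 := by
      simp only [Finset.mem_range] at hj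
      omega
    simp only [bb, if_pos hjN, P]
    ring
  rw [hfun, hval] at htotal
  exact htotal
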